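/- Let H and G be simple graphs, a ≠ b two vertices of H, and f : H → G a graph homomorphism with f(a) = f(b). Suppose that for every digraph D without isolated points, every graph homomorphism χ : H → D ⋆ H satisfying f_D ∘ χ = f equals φ_{(u,v)} for some (u,v) ∈ E(D). Then for all digraphs D₁ and D₂ without isolated points and every graph homomorphism χ : D₁ ⋆ H → D₂ ⋆ H satisfying f_{D₁} = f_{D₂} ∘ χ, the restriction of χ to D₁ is a digraph homomorphism h : D₁ → D₂ and χ = h ⋆ H. (Hence the arrow construction is a full and faithful functor from digraphs without isolated points to Gra/G.) -/

import Mathlib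

open SimpleGraph

attribute [local instance] Classical.propDecidable

/-- The vertex set of the arrow construction `D ⋆ H`: the disjoint union of `D` and
`E(D) × (V(H) ∖ {a, b})`, where `E(D)` is the set of edges of the digraph `(D, E)` and
`a`, `b` are the two distinguished vertices of `H`. -/
def starVert (V : Type*) (a b : V) (D : Type*) (E : D → D → Prop) : Type _ :=
  D ⊕ ({p : D × D // E p.1 p.2} × {x : V // x ≠ a ∧ x ≠ b})

/-- For an edge `(u, v)` of the digraph `(D, E)`, the map
`φ_{(u,v)} : V(H) → V(D ⋆ H)` sending `a ↦ u`, `b ↦ v`, and `x ↦ (u, v, x)` otherwise. -/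
noncomputable def starPhi {V : Type*} (a b : V) {D : Type*} {E : D → D → Prop}
    (u v : D) (huv : E u v) (x : V) : starVert V a b D E :=
  if hx : x = a then Sum.inl u
  else if hx' : x = b then Sum.inl v
  else Sum.inr (⟨(u, v), huv⟩, ⟨x, hx, hx'⟩)

/-- The arrow construction `D ⋆ H` for a simple graph `H` with distinguished vertices
`a`, `b` and a digraph `(D, E)`: the edges are exactly the pairs
`(φ_{(u,v)} s, φ_{(u,v)} t)` for `(u, v) ∈ E(D)` and `(s, t) ∈ E(H)`. -/
noncomputable def starGraph {V : Type*} (H : SimpleGraph V) (a b : V)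
    (D : Type*) (E : D → D → Prop) : SimpleGraph (starVert V a b D E) :=
  SimpleGraph.fromRel (fun x y => ∃ (u v : D) (huv : E u v) (s t : V),
    H.Adj s t ∧ starPhi a b u v huv s = x ∧ starPhi a b u v huv t = y)

/-- Given a vertex map `f : V(H) → V(G)` (intended to satisfy `f a = f b`), the map
`f_D : V(D ⋆ H) → V(G)` sending every vertex of `D` to `f a` and `(u, v, y) ↦ f y`. -/
def starMap {V W : Type*} (f : V → W) (a b : V) {D : Type*} {E : D → D → Prop} :
    starVert V a b D E → W :=
  Sum.elim (fun _ => f a) (fun p => f p.2.val)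

/-- Given a digraph homomorphism `h : (D₁, E₁) → (D₂, E₂)`, the map
`h ⋆ H : V(D₁ ⋆ H) → V(D₂ ⋆ H)` sending `x ↦ h x` for `x ∈ D₁` and
`(u, v, w) ↦ (h u, h v, w)`. -/
def starMapHom {V : Type*} (a b : V) {D₁ D₂ : Type*}
    {E₁ : D₁ → D₁ → Prop} {E₂ : D₂ → D₂ → Prop}
    (h : D₁ → D₂) (hh : ∀ u v, E₁ u v → E₂ (h u) (h v)) :
    starVert V a b D₁ E₁ → starVert V a b D₂ E₂ :=
  Sum.elim (fun x => Sum.inl (h x))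
    (fun p => Sum.inr (⟨(h p.1.val.1, h p.1.val.2), hh _ _ p.1.prop⟩, p.2))

lemma starPhi_a {V : Type*} (a b : V) (hab : a ≠ b) {D : Type*} {E : D → D → Prop}
    (u v : D) (huv : E u v) : starPhi a b u v huv a = Sum.inl u := by
  simp [starPhi]; rfl

lemma starPhi_b {V : Type*} (a b : V) (hab : a ≠ b) {D : Type*} {E : D → D → Prop}
    (u v : D) (huv : E u v) : starPhi a b u v huv b = Sum.inl v := by
  simp [starPhi, hab.symm]; rfl

lemma starPhi_other {V : Type*} (a b : V) {D : Type*} {E : D → D → Prop}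
    (u v : D) (huv : E u v) {x : V} (hxa : x ≠ a) (hxb : x ≠ b) :
    starPhi a b u v huv x = Sum.inr (⟨(u, v), huv⟩, ⟨x, hxa, hxb⟩) := by
  simp [starPhi, hxa, hxb]; rfl

lemma starPhi_adj {V : Type*} {H : SimpleGraph V} {a b : V} (hab : a ≠ b)
    (hnab : ¬ H.Adj a b) {D : Type*} {E : D → D → Prop} {u v : D} (huv : E u v)
    {s t : V} (hst : H.Adj s t) :
    (starGraph H a b D E).Adj (starPhi a b u v huv s) (starPhi a b u v huv t) := by
  rw [_root_.starGraph, SimpleGraph.fromRel_adj]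
  refine ⟨?_, Or.inl ⟨u, v, huv, s, t, hst, rfl, rfl⟩⟩
  by_cases hs : s = a
  · by_cases ht : t = b
    · exact absurd (by rwa [hs, ht] at hst) hnab
    · have hta : t ≠ a := fun h => hst.ne (hs.trans h.symm)
      rw [hs, starPhi_a a b hab, starPhi_other a b u v huv hta ht]
      exact fun h => by cases h
  · by_cases hs' : s = b
    · by_cases ht : t = a
      · exact absurd (by have h2 := hst.symm; rwa [hs', ht] at h2) hnab
      · have htb : t ≠ b := fun h => hst.ne (hs'.trans h.symm)
        rw [hs', starPhi_b a b hab, starPhi_other a b u v huv ht htb]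
        exact fun h => by cases h
    · by_cases ht : t = a
      · rw [starPhi_other a b u v huv hs hs', ht, starPhi_a a b hab]
        exact fun h => by cases h
      · by_cases ht' : t = b
        · rw [starPhi_other a b u v huv hs hs', ht', starPhi_b a b hab]
          exact fun h => by cases h
        · rw [starPhi_other a b u v huv hs hs', starPhi_other a b u v huv ht ht']
          exact fun h => hst.ne (congrArg (fun q => q.2.val) (Sum.inr.inj h))

lemma starMap_starPhi {V W : Type*} (f : V → W) (a b : V) (hf : f a = f b)
    {D : Type*} {E : D → D → Prop} (u v : D) (huv : E u v) (x : V) :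
    starMap f a b (starPhi a b u v huv x) = f x := by
  unfold starPhi starMap
  by_cases h1 : x = a
  · subst h1; simp
  · by_cases h2 : x = b
    · subst h2; simp [h1, hf]
    · simp [h1, h2]

/-- Let `H`, `G` be simple graphs, `a ≠ b` two vertices of `H`, and `f : H → G` a graph
homomorphism with `f a = f b`. Suppose that for every digraph without isolated points,
every graph homomorphism `χ : H → D ⋆ H` with `f_D ∘ χ = f` equals `φ_{(u,v)}` for some edge
`(u, v)` of `D`. Then for all digraphs `D₁`, `D₂` without isolated points and every graph
homomorphism `χ : D₁ ⋆ H → D₂ ⋆ H` with `f_{D₁} = f_{D₂} ∘ χ`, the restriction of `χ` to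
`D₁` is a digraph homomorphism `h : D₁ → D₂` and `χ = h ⋆ H`. (Hence the arrow construction
is a full and faithful functor from digraphs without isolated points to `Gra/G`.) -/
theorem stmt9 {V W : Type*} (H : SimpleGraph V) (G : SimpleGraph W)
    (a b : V) (hab : a ≠ b) (f : H →g G) (hf : f a = f b)
    (hyp : ∀ (D : Type w) (E : D → D → Prop), (∀ d : D, ∃ d', E d d' ∨ E d' d) →
      ∀ χ : V → starVert V a b D E,
        (∀ s t : V, H.Adj s t → (starGraph H a b D E).Adj (χ s) (χ t)) →
        (∀ x : V, starMap (⇑f) a b (χ x) = f x) →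
        ∃ (u v : D) (huv : E u v), χ = starPhi a b u v huv)
    (D₁ D₂ : Type w) (E₁ : D₁ → D₁ → Prop) (E₂ : D₂ → D₂ → Prop)
    (hD₁ : ∀ d : D₁, ∃ d', E₁ d d' ∨ E₁ d' d) (hD₂ : ∀ d : D₂, ∃ d', E₂ d d' ∨ E₂ d' d)
    (χ : starVert V a b D₁ E₁ → starVert V a b D₂ E₂)
    (hom : ∀ x y, (starGraph H a b D₁ E₁).Adj x y →
      (starGraph H a b D₂ E₂).Adj (χ x) (χ y))
    (hcomp : ∀ x, starMap (⇑f) a b x = starMap (⇑f) a b (χ x)) :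
    ∃ (h : D₁ → D₂) (hh : ∀ u v, E₁ u v → E₂ (h u) (h v)),
      (∀ x : D₁, χ (Sum.inl x) = Sum.inl (h x)) ∧ χ = starMapHom a b h hh := by
  have hnab : ¬ H.Adj a b := by
    intro hadj
    have h2 := f.map_adj hadj
    rw [hf] at h2
    exact G.loopless.irrefl _ h2
  -- χ ∘ φ_{(u,v)} equals some φ_{(u',v')}
  have key : ∀ u v (huv : E₁ u v), ∃ (u' : D₂) (v' : D₂) (h' : E₂ u' v'),
      (fun x => χ (starPhi a b u v huv x)) = starPhi a b u' v' h' := by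
    intro u v huv
    refine hyp D₂ E₂ hD₂ _ (fun s t hst => hom _ _ (starPhi_adj hab hnab huv hst)) ?_
    intro x
    rw [← hcomp, starMap_starPhi _ _ _ hf]
  have hinl : ∀ d : D₁, ∃ d₂ : D₂, χ (Sum.inl d) = Sum.inl d₂ := by
    intro d
    obtain ⟨d', hd | hd⟩ := hD₁ d
    · obtain ⟨u', v', h', heq⟩ := key d d' hd
      have := congrFun heq a
      rw [starPhi_a a b hab, starPhi_a a b hab] at this
      exact ⟨u', this⟩
    · obtain ⟨u', v', h', heq⟩ := key d' d hd
      have := congrFun heq b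
      rw [starPhi_b a b hab, starPhi_b a b hab] at this
      exact ⟨v', this⟩
  set h : D₁ → D₂ := fun d => (hinl d).choose with hh_def
  have hchi : ∀ d : D₁, χ (Sum.inl d) = Sum.inl (h d) := fun d => (hinl d).choose_spec
  -- for an edge (u,v) of D₁, the φ given by `key` is φ_{(h u, h v)}
  have key' : ∀ u v (huv : E₁ u v), ∃ h' : E₂ (h u) (h v),
      (fun x => χ (starPhi a b u v huv x)) = starPhi a b (h u) (h v) h' := by
    intro u v huv
    obtain ⟨u', v', h', heq⟩ := key u v huv
    have ha := congrFun heq a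
    rw [starPhi_a a b hab, starPhi_a a b hab, hchi u] at ha
    have hb := congrFun heq b
    rw [starPhi_b a b hab, starPhi_b a b hab, hchi v] at hb
    obtain rfl : h u = u' := Sum.inl.inj ha
    obtain rfl : h v = v' := Sum.inl.inj hb
    exact ⟨h', heq⟩
  have hh : ∀ u v, E₁ u v → E₂ (h u) (h v) := fun u v huv => (key' u v huv).choose
  refine ⟨h, hh, hchi, ?_⟩
  funext x
  cases x with
  | inl d => exact hchi d
  | inr p =>
    obtain ⟨⟨⟨u, v⟩, huv⟩, ⟨y, hya, hyb⟩⟩ := p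
    obtain ⟨h', heq⟩ := key' u v huv
    have := congrFun heq y
    rw [starPhi_other a b u v huv hya hyb, starPhi_other a b (h u) (h v) h' hya hyb] at this
    rw [this]
    rfl
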